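/- Let $\sigma \in (5/3,2)$ and for $z \in \mathbb{C}$ away from poles define $Q(z) = \sum_{j=0}^2 \frac{c_j\,\Gamma(2 + j/3 - \sigma)}{\sigma - j/3 - 1}\cdot\frac{\Gamma(\sigma - 1 - j/3 - z)}{\Gamma(\sigma - 1 - z)}$ with $c_0 = c_2 = 1$, $c_1 = 2$. Then for $j \in \{1,2\}$ and $n \in \mathbb{N}_0$, the residue of $Q$ at the simple pole $z_{j,n} = \sigma - 1 - j/3 + n$ equals $-\frac{c_j\,\Gamma(2+j/3-\sigma)}{\pi(\sigma - j/3 - 1)}\cdot\frac{\Gamma(1 - j/3 + n)}{\Gamma(1+n)}\,\sin\!\big(\tfrac{\pi j}{3}\big)$, and this residue is strictly negative. -/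

import Mathlib

open Set Filter

/-- The coefficients `c₀ = c₂ = 1`, `c₁ = 2`. -/
noncomputable def cCoef : ℕ → ℝ := fun j => if j = 1 then 2 else 1

/-- `Q(z) = ∑_{j=0}^2 (c_j Γ(2+j/3-σ)/(σ-j/3-1)) · Γ(σ-1-j/3-z)/Γ(σ-1-z)`. -/
noncomputable def Qfun (σ : ℝ) (z : ℂ) : ℂ :=
  ∑ j ∈ Finset.range 3,
    ((cCoef j * Real.Gamma (2 + (j : ℝ) / 3 - σ) / (σ - (j : ℝ) / 3 - 1) : ℝ) : ℂ)
      * (Complex.Gamma ((σ : ℂ) - 1 - (j : ℝ) / 3 - z) / Complex.Gamma ((σ : ℂ) - 1 - z))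

lemma gamma_residue (n : ℕ) :
    Tendsto (fun w : ℂ => (w + n) * Complex.Gamma w) (nhdsWithin (-n : ℂ) {(-n : ℂ)}ᶜ)
      (nhds ((-1)^n / n.factorial)) := by
  induction n with
  | zero =>
    simpa using Complex.tendsto_self_mul_Gamma_nhds_zero
  | succ n ih =>
    have key : Tendsto (fun w : ℂ => ((w + 1) + n) * Complex.Gamma (w + 1) * w⁻¹)
        (nhdsWithin (-(n+1:ℕ) : ℂ) {(-(n+1:ℕ) : ℂ)}ᶜ)
        (nhds (((-1)^n / n.factorial) * (-(n+1:ℕ) : ℂ)⁻¹)) := by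
      refine Tendsto.mul ?_ ?_
      · refine ih.comp ?_
        have hc : Tendsto (fun w : ℂ => w + 1) (nhds (-(n+1:ℕ) : ℂ)) (nhds (-n : ℂ)) := by
          have h2 := (continuous_add_right (1:ℂ)).tendsto (-(n+1:ℕ) : ℂ)
          convert h2 using 2
          push_cast; ring
        refine tendsto_nhdsWithin_of_tendsto_nhds_of_eventually_within _
          (hc.mono_left nhdsWithin_le_nhds) ?_
        filter_upwards [self_mem_nhdsWithin] with w hw
        simp only [mem_compl_iff, mem_singleton_iff] at hw ⊢
        intro h; apply hw
        have : w = (-n : ℂ) - 1 := by linear_combination h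
        rw [this]; push_cast; ring
      · refine Tendsto.mono_left ?_ nhdsWithin_le_nhds
        refine Tendsto.inv₀ (continuous_id.tendsto _) ?_
        simp only [neg_ne_zero, Ne, Nat.cast_eq_zero]
        exact Nat.succ_ne_zero n
    have heq : ∀ᶠ w in nhdsWithin (-(n+1:ℕ) : ℂ) {(-(n+1:ℕ) : ℂ)}ᶜ,
        ((w + 1) + n) * Complex.Gamma (w + 1) * w⁻¹ = (w + (n+1:ℕ)) * Complex.Gamma w := by
      have hne : ∀ᶠ w : ℂ in nhdsWithin (-(n+1:ℕ) : ℂ) {(-(n+1:ℕ) : ℂ)}ᶜ, w ≠ 0 := by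
        have h0 : (-(n+1:ℕ) : ℂ) ≠ 0 := by
          simp only [neg_ne_zero, Ne, Nat.cast_eq_zero]
          exact Nat.succ_ne_zero n
        exact (eventually_ne_nhds h0).filter_mono nhdsWithin_le_nhds
      filter_upwards [hne] with w hw
      rw [Complex.Gamma_add_one w hw]
      field_simp
      push_cast; ring
    have h3 := key.congr' heq
    convert h3 using 2
    have hfac : ((n+1).factorial : ℂ) = ((n+1 : ℕ):ℂ) * (n.factorial : ℂ) := by
      rw [Nat.factorial_succ]; push_cast; ring
    have hne : (n.factorial : ℂ) ≠ 0 := Nat.cast_ne_zero.mpr (Nat.factorial_ne_zero n)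
    have hne1 : ((n+1:ℕ):ℂ) ≠ 0 := Nat.cast_ne_zero.mpr (Nat.succ_ne_zero n)
    rw [hfac, pow_succ]
    field_simp

lemma frac_ne_int {x : ℝ} (hx0 : 0 < x) (hx1 : x < 1) (a b : ℤ) : x + a ≠ b := by
  intro h
  have hx : x = ((b - a : ℤ) : ℝ) := by push_cast; linarith
  rw [hx] at hx0 hx1
  have h0 : (0:ℤ) < b - a := by exact_mod_cast hx0
  have h1 : (b - a : ℤ) < 1 := by exact_mod_cast hx1
  omega

lemma shifted_ne {x : ℝ} (hx0 : 0 < x) (hx1 : x < 1) (a : ℤ) {y : ℝ} (hy : y = x + a)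
    (m : ℕ) : y ≠ -(m:ℝ) := by
  rw [hy]
  intro h
  exact frac_ne_int hx0 hx1 a (-m) (by push_cast at h ⊢; linarith)

lemma real_value {x : ℝ} (hx0 : 0 < x) (hx1 : x < 1) (n : ℕ) (c G s : ℝ) (hs : s ≠ 0) :
    -(c * G / (Real.pi * s)) * (Real.Gamma (1 - x + n) / Real.Gamma (1 + n))
      * Real.sin (Real.pi * x)
    = (c * G / s) * (-((-1)^n / n.factorial)) / Real.Gamma (x - n) := by
  have hΓn : Real.Gamma (1 + (n:ℝ)) = n.factorial := by
    rw [add_comm]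
    exact_mod_cast Real.Gamma_nat_eq_factorial n
  have hcos : Real.cos ((n:ℝ) * Real.pi) = (-1)^n := by
    simpa using Real.cos_nat_mul_pi_sub 0 n
  have hsin : Real.sin (Real.pi * (x - n)) = (-1)^n * Real.sin (Real.pi * x) := by
    rw [show Real.pi * (x - (n:ℝ)) = Real.pi * x - (n:ℝ) * Real.pi by ring,
      Real.sin_sub, Real.sin_nat_mul_pi, hcos]
    ring
  have hsx : Real.sin (Real.pi * x) ≠ 0 := by
    refine ne_of_gt (Real.sin_pos_of_pos_of_lt_pi ?_ ?_)
    · positivity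
    · nlinarith [Real.pi_pos]
  have hΓ1 : 0 < Real.Gamma (1 - x + n) := by
    refine Real.Gamma_pos_of_pos ?_
    have := Nat.cast_nonneg (α := ℝ) n
    linarith
  have hrefl := Real.Gamma_mul_Gamma_one_sub (x - n)
  rw [show (1:ℝ) - (x - (n:ℝ)) = 1 - x + n by ring, hsin] at hrefl
  have hΓval : Real.Gamma (x - n)
      = Real.pi / ((-1)^n * Real.sin (Real.pi * x)) / Real.Gamma (1 - x + n) := by
    rw [eq_div_iff (ne_of_gt hΓ1)]
    exact hrefl
  have hm1 : ((-1:ℝ))^n ≠ 0 := by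
    intro h
    simpa using congrArg (|·|) h
  have hfacne : (n.factorial : ℝ) ≠ 0 := Nat.cast_ne_zero.mpr (Nat.factorial_ne_zero n)
  rw [hΓn, hΓval]
  have hsq : ((-1:ℝ)^n) * ((-1:ℝ)^n) = 1 := by
    rw [← pow_add]
    exact (neg_one_pow_eq_one_iff_even (by norm_num)).mpr (by exact ⟨n, by ring⟩)
  have h2 : ((-1:ℝ))^(n*2) = 1 := by
    rw [pow_mul, sq, hsq]
  field_simp
  ring_nf
  rw [h2]
  ring

lemma ofReal_ne_neg_nat {r : ℝ} (h : ∀ m : ℕ, r ≠ -(m:ℝ)) (m : ℕ) :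
    ((r : ℝ) : ℂ) ≠ -(m:ℂ) := by
  intro hm
  exact h m (by exact_mod_cast hm)

/-- Auxiliary: a term that is regular at `z₀` contributes zero after multiplication
by `z - z₀`. -/
lemma aux_zero (z₀ a b : ℂ) (A : ℂ) (ha : ∀ m : ℕ, a - z₀ ≠ -(m:ℂ))
    (hb : ∀ m : ℕ, b - z₀ ≠ -(m:ℂ)) :
    Tendsto (fun z : ℂ => (z - z₀) * (A * (Complex.Gamma (a - z) / Complex.Gamma (b - z))))
      (nhdsWithin z₀ {z₀}ᶜ) (nhds 0) := by
  have hcont : ContinuousAt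
      (fun z : ℂ => A * (Complex.Gamma (a - z) / Complex.Gamma (b - z))) z₀ := by
    have h1 : ContinuousAt (fun z : ℂ => Complex.Gamma (a - z)) z₀ :=
      (Complex.differentiableAt_Gamma _ ha).continuousAt.comp
        ((continuous_const.sub continuous_id).continuousAt)
    have h2 : ContinuousAt (fun z : ℂ => Complex.Gamma (b - z)) z₀ :=
      (Complex.differentiableAt_Gamma _ hb).continuousAt.comp
        ((continuous_const.sub continuous_id).continuousAt)
    exact continuousAt_const.mul (h1.div h2 (Complex.Gamma_ne_zero hb))
  have h0 : Tendsto (fun z : ℂ => z - z₀) (nhdsWithin z₀ {z₀}ᶜ) (nhds 0) := by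
    have := ((continuous_id.sub (continuous_const (y := z₀))).tendsto z₀).mono_left
      (nhdsWithin_le_nhds (s := {z₀}ᶜ))
    rw [show (0:ℂ) = id z₀ - z₀ by simp]; exact this
  simpa using h0.mul (hcont.tendsto.mono_left nhdsWithin_le_nhds)

/-- Auxiliary: the singular term. -/
lemma aux_main (z₀ b : ℂ) (n : ℕ) (A : ℂ) (hb : ∀ m : ℕ, b - z₀ ≠ -(m:ℂ)) :
    Tendsto (fun z : ℂ =>
        (z - z₀) * (A * (Complex.Gamma ((z₀ - n) - z) / Complex.Gamma (b - z))))
      (nhdsWithin z₀ {z₀}ᶜ)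
      (nhds (A * (-((-1)^n / n.factorial)) * (Complex.Gamma (b - z₀))⁻¹)) := by
  have hmap : Tendsto (fun z : ℂ => (z₀ - n) - z) (nhdsWithin z₀ {z₀}ᶜ)
      (nhdsWithin (-n : ℂ) {(-n : ℂ)}ᶜ) := by
    have hc : Tendsto (fun z : ℂ => (z₀ - n) - z) (nhds z₀) (nhds (-n : ℂ)) := by
      have h2 : Tendsto (fun z : ℂ => (z₀ - n) - z) (nhds z₀) (nhds ((z₀ - n) - z₀)) :=
        (continuous_const.sub continuous_id).tendsto z₀
      convert h2 using 2
      ring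
    refine tendsto_nhdsWithin_of_tendsto_nhds_of_eventually_within _
      (hc.mono_left nhdsWithin_le_nhds) ?_
    filter_upwards [self_mem_nhdsWithin] with w hw
    simp only [mem_compl_iff, mem_singleton_iff] at hw ⊢
    intro h; apply hw
    linear_combination -h
  have hres : Tendsto (fun z : ℂ => (((z₀ - n) - z) + n) * Complex.Gamma ((z₀ - n) - z))
      (nhdsWithin z₀ {z₀}ᶜ) (nhds ((-1)^n / n.factorial)) :=
    (gamma_residue n).comp hmap
  have hinv : Tendsto (fun z : ℂ => (Complex.Gamma (b - z))⁻¹) (nhdsWithin z₀ {z₀}ᶜ)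
      (nhds ((Complex.Gamma (b - z₀))⁻¹)) := by
    have h2 : ContinuousAt (fun z : ℂ => Complex.Gamma (b - z)) z₀ :=
      (Complex.differentiableAt_Gamma _ hb).continuousAt.comp
        ((continuous_const.sub continuous_id).continuousAt)
    exact ((h2.inv₀ (Complex.Gamma_ne_zero hb)).tendsto).mono_left nhdsWithin_le_nhds
  have key := ((tendsto_const_nhds (x := A)).mul hres.neg).mul hinv
  refine key.congr ?_
  intro z
  ring_nf

/-- for `σ ∈ (5/3,2)`, `j ∈ {1,2}` and `n ∈ ℕ`, the residue of `Q` at the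
simple pole `z_{j,n} = σ - 1 - j/3 + n` equals
`-(c_j Γ(2+j/3-σ)/(π(σ-j/3-1))) · (Γ(1-j/3+n)/Γ(1+n)) · sin(πj/3)`, and it is negative. -/
theorem stmt13 (σ : ℝ) (hσ : σ ∈ Ioo (5/3 : ℝ) 2) (j : ℕ) (hj : j = 1 ∨ j = 2) (n : ℕ) :
    Tendsto (fun z : ℂ => (z - ((σ - 1 - (j : ℝ) / 3 + n : ℝ) : ℂ)) * Qfun σ z)
        (nhdsWithin ((σ - 1 - (j : ℝ) / 3 + n : ℝ) : ℂ) {((σ - 1 - (j : ℝ) / 3 + n : ℝ) : ℂ)}ᶜ)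
        (nhds ((-(cCoef j * Real.Gamma (2 + (j : ℝ) / 3 - σ)
            / (Real.pi * (σ - (j : ℝ) / 3 - 1)))
          * (Real.Gamma (1 - (j : ℝ) / 3 + n) / Real.Gamma (1 + n))
          * Real.sin (Real.pi * j / 3) : ℝ) : ℂ)) ∧
    (-(cCoef j * Real.Gamma (2 + (j : ℝ) / 3 - σ) / (Real.pi * (σ - (j : ℝ) / 3 - 1)))
        * (Real.Gamma (1 - (j : ℝ) / 3 + n) / Real.Gamma (1 + n))
        * Real.sin (Real.pi * j / 3) : ℝ) < 0 := by
  obtain ⟨hσ1, hσ2⟩ := hσ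
  -- basic facts
  have hx0 : 0 < (j:ℝ)/3 := by rcases hj with rfl | rfl <;> norm_num
  have hx1 : (j:ℝ)/3 < 1 := by rcases hj with rfl | rfl <;> norm_num
  have hcpos : 0 < cCoef j := by
    unfold cCoef; split <;> norm_num
  have hGpos : 0 < Real.Gamma (2 + (j : ℝ) / 3 - σ) :=
    Real.Gamma_pos_of_pos (by linarith)
  have hspos : 0 < σ - (j:ℝ)/3 - 1 := by
    rcases hj with rfl | rfl <;> push_cast <;> linarith
  have hG1pos : 0 < Real.Gamma (1 - (j : ℝ) / 3 + n) :=
    Real.Gamma_pos_of_pos (by have := Nat.cast_nonneg (α := ℝ) n; linarith)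
  have hG2pos : 0 < Real.Gamma (1 + (n:ℝ)) :=
    Real.Gamma_pos_of_pos (by positivity)
  have hsin : 0 < Real.sin (Real.pi * j / 3) := by
    apply Real.sin_pos_of_pos_of_lt_pi
    · rcases hj with rfl | rfl <;> push_cast <;> positivity
    · rcases hj with rfl | rfl <;> push_cast <;> nlinarith [Real.pi_pos]
  constructor
  · set z₀ : ℂ := ((σ - 1 - (j : ℝ) / 3 + n : ℝ) : ℂ) with hz
    have hb : ∀ m : ℕ, ((σ : ℂ) - 1) - z₀ ≠ -(m:ℂ) := by
      intro m
      have heq : ((σ : ℂ) - 1) - z₀ = (((j:ℝ)/3 - n : ℝ) : ℂ) := by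
        rw [hz]; push_cast; ring
      rw [heq]
      refine ofReal_ne_neg_nat (fun m' => shifted_ne hx0 hx1 (-(n:ℤ)) (by push_cast; ring) m') m
    set L : ℂ := ((cCoef j * Real.Gamma (2 + (j : ℝ) / 3 - σ) / (σ - (j : ℝ) / 3 - 1) : ℝ) : ℂ)
        * (-((-1)^n / n.factorial)) * (Complex.Gamma (((σ : ℂ) - 1) - z₀))⁻¹ with hL
    have hterm : ∀ j' ∈ Finset.range 3,
        Tendsto (fun z : ℂ => (z - z₀) *
            (((cCoef j' * Real.Gamma (2 + (j' : ℝ) / 3 - σ) / (σ - (j' : ℝ) / 3 - 1) : ℝ) : ℂ)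
              * (Complex.Gamma ((σ : ℂ) - 1 - (j' : ℝ) / 3 - z)
                  / Complex.Gamma ((σ : ℂ) - 1 - z))))
          (nhdsWithin z₀ {z₀}ᶜ) (nhds (if j' = j then L else 0)) := by
      intro j' hj'
      by_cases h : j' = j
      · subst h
        rw [if_pos rfl]
        have haj : ((σ : ℂ) - 1 - (j' : ℝ) / 3 : ℂ) = z₀ - n := by
          rw [hz]; push_cast; ring
        refine (aux_main z₀ ((σ : ℂ) - 1) n _ hb).congr (fun z => ?_)
        rw [haj]
      · rw [if_neg h]
        have hj3 : j' < 3 := Finset.mem_range.mp hj'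
        have ha : ∀ m : ℕ, ((σ : ℂ) - 1 - (j' : ℝ) / 3) - z₀ ≠ -(m:ℂ) := by
          intro m
          have heq : ((σ : ℂ) - 1 - (j' : ℝ) / 3) - z₀
              = (((j:ℝ)/3 - (j':ℝ)/3 - n : ℝ) : ℂ) := by
            rw [hz]; push_cast; ring
          rw [heq]
          refine ofReal_ne_neg_nat (fun m' => ?_) m
          interval_cases j'
          · rcases hj with rfl | rfl
            · exact shifted_ne (x := 1/3) (by norm_num) (by norm_num) (-(n:ℤ))
                (by push_cast; ring) m'
            · exact shifted_ne (x := 2/3) (by norm_num) (by norm_num) (-(n:ℤ))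
                (by push_cast; ring) m'
          · rcases hj with rfl | rfl
            · exact absurd rfl h
            · exact shifted_ne (x := 1/3) (by norm_num) (by norm_num) (-(n:ℤ))
                (by push_cast; ring) m'
          · rcases hj with rfl | rfl
            · exact shifted_ne (x := 2/3) (by norm_num) (by norm_num) (-(n:ℤ)-1)
                (by push_cast; ring) m'
            · exact absurd rfl h
        exact aux_zero z₀ ((σ : ℂ) - 1 - (j' : ℝ) / 3) ((σ : ℂ) - 1) _ ha hb
    have total := tendsto_finset_sum (Finset.range 3) hterm
    have hLsum : (∑ j' ∈ Finset.range 3, if j' = j then L else 0) = L := by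
      rw [Finset.sum_ite_eq' (Finset.range 3) j (fun _ => L)]
      rw [if_pos (Finset.mem_range.mpr (by rcases hj with rfl | rfl <;> norm_num))]
    have hsum : ∀ z : ℂ, (z - z₀) * Qfun σ z
        = ∑ j' ∈ Finset.range 3, (z - z₀) *
            (((cCoef j' * Real.Gamma (2 + (j' : ℝ) / 3 - σ) / (σ - (j' : ℝ) / 3 - 1) : ℝ) : ℂ)
              * (Complex.Gamma ((σ : ℂ) - 1 - (j' : ℝ) / 3 - z)
                  / Complex.Gamma ((σ : ℂ) - 1 - z))) := by
      intro z
      simp only [Qfun, Finset.mul_sum]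
    have hfinal : ((-(cCoef j * Real.Gamma (2 + (j : ℝ) / 3 - σ)
            / (Real.pi * (σ - (j : ℝ) / 3 - 1)))
          * (Real.Gamma (1 - (j : ℝ) / 3 + n) / Real.Gamma (1 + n))
          * Real.sin (Real.pi * j / 3) : ℝ) : ℂ) = L := by
      have heq : ((σ : ℂ) - 1) - z₀ = (((j:ℝ)/3 - n : ℝ) : ℂ) := by
        rw [hz]; push_cast; ring
      rw [hL, heq, Complex.Gamma_ofReal]
      rw [show Real.pi * (j:ℝ) / 3 = Real.pi * ((j:ℝ)/3) by ring]
      rw [real_value hx0 hx1 n (cCoef j) (Real.Gamma (2 + (j : ℝ) / 3 - σ))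
        (σ - (j:ℝ)/3 - 1) (ne_of_gt hspos)]
      push_cast
      ring
    rw [hLsum] at total
    have final := total.congr (fun z => (hsum z).symm)
    rw [← hfinal] at final
    exact final
  · have hApos : 0 < cCoef j * Real.Gamma (2 + (j : ℝ) / 3 - σ)
        / (Real.pi * (σ - (j : ℝ) / 3 - 1)) := by
      apply div_pos (mul_pos hcpos hGpos) (mul_pos Real.pi_pos hspos)
    have hBpos : 0 < Real.Gamma (1 - (j : ℝ) / 3 + n) / Real.Gamma (1 + (n:ℝ)) :=
      div_pos hG1pos hG2pos
    have := mul_pos (mul_pos hApos hBpos) hsin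
    nlinarith
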